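/- When ρ = δ_ν is a point mass at a probability measure ν, the cavity function G̃_N(δ_ν) is independent of N and equals g̃(ν) := (n−1)Φ(ν) + log ∫_Ω exp(−Φ^{(1)}(ν, δ_x)) dα(x). -/

import Mathlib

open MeasureTheory
open scoped ENNReal

lemma countable_generatePiSystem {α : Type*} {S : Set (Set α)} (hS : S.Countable) :
    (generatePiSystem S).Countable := by
  refine Set.Countable.mono ?_ ((Set.countable_setOf_finite_subset hS).image Set.sInter)
  intro t ht
  induction ht with
  | base hs =>
      exact ⟨{_}, ⟨Set.finite_singleton _, Set.singleton_subset_iff.2 hs⟩,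
        Set.sInter_singleton _⟩
  | inter hs ht hne ihs iht =>
      obtain ⟨F, ⟨hF, hFS⟩, rfl⟩ := ihs
      obtain ⟨G, ⟨hG, hGS⟩, rfl⟩ := iht
      exact ⟨F ∪ G, ⟨hF.union hG, Set.union_subset hFS hGS⟩, Set.sInter_union F G⟩

lemma measurableSet_singleton_measure {Ω : Type*} [MeasurableSpace Ω]
    [MeasurableSpace.CountablyGenerated Ω] (ν : Measure Ω) [IsProbabilityMeasure ν] :
    MeasurableSet ({ν} : Set (Measure Ω)) := by
  classical
  set S := generatePiSystem (MeasurableSpace.countableGeneratingSet Ω) with hSdef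
  have hSc : S.Countable :=
    countable_generatePiSystem MeasurableSpace.countable_countableGeneratingSet
  have hgen : MeasurableSpace.generateFrom S = ‹MeasurableSpace Ω› := by
    rw [hSdef, generateFrom_generatePiSystem_eq,
      MeasurableSpace.generateFrom_countableGeneratingSet]
  have hmeasS : ∀ s ∈ S, MeasurableSet s := fun s hs => by
    rw [← hgen]; exact MeasurableSpace.measurableSet_generateFrom hs
  have hset : ({ν} : Set (Measure Ω)) =
      {μ : Measure Ω | μ Set.univ = 1} ∩ ⋂ s ∈ S, {μ : Measure Ω | μ s = ν s} := by
    ext μ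
    simp only [Set.mem_singleton_iff, Set.mem_inter_iff, Set.mem_setOf_eq, Set.mem_iInter]
    constructor
    · rintro rfl; exact ⟨measure_univ, fun s _ => rfl⟩
    · rintro ⟨h1, h2⟩
      haveI : IsProbabilityMeasure μ := ⟨h1⟩
      exact ext_of_generate_finite S hgen.symm (isPiSystem_generatePiSystem _) h2
        (by rw [h1, measure_univ])
  rw [hset]
  refine MeasurableSet.inter ?_ ?_
  · exact (Measure.measurable_coe MeasurableSet.univ) (measurableSet_singleton 1)
  · exact MeasurableSet.biInter hSc fun s hs =>
      (Measure.measurable_coe (hmeasS s hs)) (measurableSet_singleton (ν s))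

lemma integral_dirac_of_measurableSet_singleton {α : Type*} [MeasurableSpace α] {a : α}
    (h : MeasurableSet ({a} : Set α)) (f : α → ℝ) :
    ∫ x, f x ∂(Measure.dirac a) = f a := by
  have hae : f =ᵐ[Measure.dirac a] fun _ => f a := by
    rw [Filter.EventuallyEq, ae_iff]
    refine measure_mono_null (fun x hx => ?_) (by
      rw [Measure.dirac_apply' _ h.compl]
      simp : Measure.dirac a ({a} : Set α)ᶜ = 0)
    simp only [Set.mem_setOf_eq] at hx
    simp only [Set.mem_compl_iff, Set.mem_singleton_iff]
    rintro rfl; exact hx rfl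
  rw [integral_congr_ae hae, integral_const]
  simp

lemma pi_ite_integral_eq {Ω : Type*} [MeasurableSpace Ω] {m : ℕ}
    (φ : (Fin (m+1) → Ω) → ℝ) (hmeas : Measurable φ) (C : ℝ) (hb : ∀ y, |φ y| ≤ C)
    (ν : Measure Ω) [IsProbabilityMeasure ν] (μ : Measure Ω) [IsProbabilityMeasure μ] :
    ∫ y, φ y ∂(Measure.pi fun i : Fin (m+1) => if (i:ℕ)+1 = m+1 then μ else ν)
      = ∫ a, (∫ y : Fin m → Ω,
          φ ((MeasurableEquiv.piFinSuccAbove (fun _ : Fin (m+1) => Ω) (Fin.last m)).symm (a, y))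
          ∂(Measure.pi fun _ : Fin m => ν)) ∂μ := by
  classical
  set e := MeasurableEquiv.piFinSuccAbove (fun _ : Fin (m+1) => Ω) (Fin.last m) with he
  set μs : Fin (m+1) → Measure Ω := fun i => if (i:ℕ)+1 = m+1 then μ else ν with hμs
  haveI hprob : ∀ i, IsProbabilityMeasure (μs i) := fun i => by
    rw [hμs]; dsimp only; split <;> infer_instance
  haveI : ∀ i, SigmaFinite (μs i) := fun i => inferInstance
  have hmp := measurePreserving_piFinSuccAbove μs (Fin.last m)
  have h1 : μs (Fin.last m) = μ := by simp [hμs]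
  have h2 : (fun j : Fin m => μs ((Fin.last m).succAbove j)) = fun _ : Fin m => ν := by
    funext j
    have hj : (((Fin.last m).succAbove j : Fin (m+1)) : ℕ) = (j : ℕ) := by
      simp [Fin.succAbove_last]
    have hjm : (j : ℕ) < m := j.is_lt
    rw [hμs]
    dsimp only
    rw [hj, if_neg (by omega)]
  rw [h1, h2] at hmp
  have hint : Integrable (fun p : Ω × (Fin m → Ω) => φ (e.symm p))
      (μ.prod (Measure.pi fun _ : Fin m => ν)) := by
    refine Integrable.mono' (integrable_const C)
      ((hmeas.comp e.symm.measurable).aestronglyMeasurable) ?_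
    filter_upwards with p
    simpa [Real.norm_eq_abs] using hb (e.symm p)
  calc ∫ y, φ y ∂(Measure.pi μs)
      = ∫ p, φ (e.symm p) ∂(μ.prod (Measure.pi fun _ : Fin m => ν)) :=
        ((hmp.symm e).integral_comp' φ).symm
    _ = ∫ a, (∫ y : Fin m → Ω, φ (e.symm (a, y)) ∂(Measure.pi fun _ : Fin m => ν)) ∂μ :=
        integral_prod _ hint

/-- When `ρ = δ_ν` is a point mass at a probability measure `ν`, the
cavity function `G̃_N(δ_ν) = G̃_N^{(1)}(δ_ν) − G̃_N^{(2)}(δ_ν)` is independent of `N` and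
equals `g̃(ν) = (n−1)Φ(ν) + log ∫_Ω exp(−Φ^{(1)}(ν, δ_x)) dα(x)`. -/
theorem cavity_function_at_dirac
    {Ω : Type*} [MetricSpace Ω] [CompactSpace Ω] [MeasurableSpace Ω] [BorelSpace Ω]
    (α : Measure Ω) [IsProbabilityMeasure α] (n : ℕ) (hn : 1 ≤ n)
    (φ : (Fin n → Ω) → ℝ) (hmeas : Measurable φ) (C : ℝ) (hb : ∀ y, |φ y| ≤ C)
    (hsym : ∀ (σ : Equiv.Perm (Fin n)) (y : Fin n → Ω), φ (y ∘ σ) = φ y)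
    (Φ : Measure Ω → ℝ)
    (hΦ : ∀ μ : Measure Ω, Φ μ = ∫ y, φ y ∂(Measure.pi fun _ : Fin n => μ))
    (Φ1 : Measure Ω → Measure Ω → ℝ)
    (hΦ1 : ∀ ν μ : Measure Ω, Φ1 ν μ =
      n * ∫ y, φ y ∂(Measure.pi fun i : Fin n => if (i : ℕ) + 1 = n then μ else ν))
    (ν : Measure Ω) [IsProbabilityMeasure ν]
    (N : ℕ) (hN : 1 ≤ N) :
    (N : ℝ)⁻¹ * Real.log (∫ ν', (∫ x : Fin N → Ω,
        Real.exp (-((N : ℝ) * Φ1 ν' (((N : ℝ≥0∞))⁻¹ • ∑ i : Fin N, Measure.dirac (x i))))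
          ∂(Measure.pi fun _ : Fin N => α)) ∂(Measure.dirac ν))
    - (N : ℝ)⁻¹ * Real.log (∫ ν',
        Real.exp (-((N : ℝ) * (Φ1 ν' ν' - Φ ν'))) ∂(Measure.dirac ν))
    = ((n : ℝ) - 1) * Φ ν
      + Real.log (∫ x, Real.exp (-(Φ1 ν (Measure.dirac x))) ∂α) := by
  classical
  obtain ⟨m, rfl⟩ : ∃ m, n = m + 1 := ⟨n - 1, (Nat.succ_pred_eq_of_pos hn).symm⟩
  set e := MeasurableEquiv.piFinSuccAbove (fun _ : Fin (m+1) => Ω) (Fin.last m) with he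
  set H : Ω → ℝ := fun a =>
    ∫ y : Fin m → Ω, φ (e.symm (a, y)) ∂(Measure.pi fun _ : Fin m => ν) with hH
  have hHsm : StronglyMeasurable H :=
    (hmeas.comp e.symm.measurable).stronglyMeasurable.integral_prod_right'
  have hHb : ∀ a, ‖H a‖ ≤ C := by
    intro a
    have := norm_integral_le_of_norm_le_const
      (μ := Measure.pi fun _ : Fin m => ν)
      (f := fun y => φ (e.symm (a, y))) (C := C)
      (Filter.Eventually.of_forall fun y => by
        simpa [Real.norm_eq_abs] using hb (e.symm (a, y)))
    simpa [hH, measure_univ] using this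
  have hHint : ∀ (ρ : Measure Ω) [IsFiniteMeasure ρ], Integrable H ρ := by
    intro ρ _
    exact Integrable.mono' (integrable_const C) hHsm.aestronglyMeasurable
      (Filter.Eventually.of_forall hHb)
  have key : ∀ (μ : Measure Ω) [IsProbabilityMeasure μ],
      Φ1 ν μ = (((m+1 : ℕ)) : ℝ) * ∫ a, H a ∂μ := by
    intro μ _
    rw [hΦ1, pi_ite_integral_eq φ hmeas C hb ν μ]
  have hΦν : Φ ν = ∫ a, H a ∂ν := by
    have hfn : (fun _ : Fin (m+1) => ν)
        = (fun i : Fin (m+1) => if (i:ℕ)+1 = m+1 then ν else ν) := by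
      funext i; exact (ite_self ν).symm
    rw [hΦ, hfn, pi_ite_integral_eq φ hmeas C hb ν ν]
  have hΦ1νν : Φ1 ν ν = (((m+1 : ℕ)) : ℝ) * Φ ν := by rw [key ν, hΦν]
  have hg : ∀ x : Ω, Φ1 ν (Measure.dirac x) = (((m+1 : ℕ)) : ℝ) * H x := by
    intro x
    rw [key (Measure.dirac x), integral_dirac' H x hHsm]
  have hsing : MeasurableSet ({ν} : Set (Measure Ω)) := measurableSet_singleton_measure ν
  rw [integral_dirac_of_measurableSet_singleton hsing,
    integral_dirac_of_measurableSet_singleton hsing, Real.log_exp]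
  have hNne : (N : ℝ) ≠ 0 := Nat.cast_ne_zero.2 (by omega)
  set g : Ω → ℝ := fun a => Real.exp (-((((m+1 : ℕ)) : ℝ) * H a)) with hgdef
  have hinteg : ∀ x : Fin N → Ω,
      Real.exp (-((N:ℝ) * Φ1 ν ((N:ℝ≥0∞)⁻¹ • ∑ i : Fin N, Measure.dirac (x i))))
        = ∏ i : Fin N, g (x i) := by
    intro x
    haveI : IsProbabilityMeasure ((N:ℝ≥0∞)⁻¹ • ∑ i : Fin N, Measure.dirac (x i)) := by
      constructor
      have hsum : (∑ i : Fin N, Measure.dirac (x i)) Set.univ = (N : ℝ≥0∞) := by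
        rw [Measure.finset_sum_apply]
        simp
      rw [Measure.smul_apply, hsum, smul_eq_mul,
        ENNReal.inv_mul_cancel (by exact_mod_cast Nat.cast_ne_zero.2 (by omega : N ≠ 0))
          (ENNReal.natCast_ne_top N)]
    rw [key _]
    have hsum2 : ∫ a, H a ∂((N:ℝ≥0∞)⁻¹ • ∑ i : Fin N, Measure.dirac (x i))
        = (N:ℝ)⁻¹ * ∑ i : Fin N, H (x i) := by
      rw [integral_smul_measure,
        integral_finset_sum_measure (fun i _ => hHint (Measure.dirac (x i)))]
      simp only [integral_dirac' H _ hHsm, smul_eq_mul]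
      congr 1
      rw [ENNReal.toReal_inv]
      simp
    rw [hsum2]
    have halg : -((N:ℝ) * ((((m+1 : ℕ)) : ℝ) * ((N:ℝ)⁻¹ * ∑ i : Fin N, H (x i))))
        = ∑ i : Fin N, -((((m+1 : ℕ)) : ℝ) * H (x i)) := by
      rw [Finset.sum_neg_distrib, ← Finset.mul_sum]
      field_simp
    rw [halg, Real.exp_sum]
  simp only [hinteg]
  have hprod : ∫ x : Fin N → Ω, ∏ i : Fin N, g (x i) ∂(Measure.pi fun _ : Fin N => α)
      = (∫ a, g a ∂α) ^ N := by
    letI : MeasureSpace Ω := ⟨α⟩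
    haveI : SigmaFinite (volume : Measure Ω) := by
      change SigmaFinite α; infer_instance
    have := MeasureTheory.integral_fintype_prod_eq_pow (ι := Fin N) g (μ := α)
    simpa using this
  rw [hprod, Real.log_pow]
  have hRHS : (∫ x, Real.exp (-(Φ1 ν (Measure.dirac x))) ∂α) = ∫ a, g a ∂α := by
    refine integral_congr_ae (Filter.Eventually.of_forall fun x => ?_)
    show Real.exp (-(Φ1 ν (Measure.dirac x))) = g x
    rw [hg x]
  rw [hRHS, hΦ1νν]
  push_cast
  field_simp
  ring
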